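/- arXiv:2206.05947 — 4 statements merged into one kernel-verified Lean document; each statement's English description precedes it below -/
import Mathlib

section
/- (Jacobi's complementary minor formula) Let L ∈ ℝ^{n×n} be a non-singular matrix and I, J ⊆ [n] with |I| = |J|. Then det L[I,J] = (−1)^{Σ_{i∈I} i + Σ_{j∈J} j} · det L · det L^{−1}[J̄, Ī], where Ī = [n] \ I and J̄ = [n] \ J. -/
open Matrix Finset Equiv




lemma blockJacobi {α β : Type*} [Fintype α] [Fintype β] [DecidableEq α] [DecidableEq β]
    (N : Matrix (α ⊕ β) (α ⊕ β) ℝ) (hN : IsUnit N.det) :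
    Matrix.det (Matrix.of fun a b : α => N (.inl a) (.inl b)) =
      N.det * Matrix.det (Matrix.of fun b a : β => N⁻¹ (.inr b) (.inr a)) := by
  have hNN : N * N⁻¹ = 1 := Matrix.mul_nonsing_inv N hN
  set A := N.toBlocks₁₁ with hA
  set B := N.toBlocks₁₂ with hB
  set C := N.toBlocks₂₁ with hC
  set D := N.toBlocks₂₂ with hD
  set A' := N⁻¹.toBlocks₁₁ with hA'
  set B' := N⁻¹.toBlocks₁₂ with hB'
  set C' := N⁻¹.toBlocks₂₁ with hC'
  set D' := N⁻¹.toBlocks₂₂ with hD'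
  have hN' : N = Matrix.fromBlocks A B C D := (Matrix.fromBlocks_toBlocks N).symm
  have hNi : N⁻¹ = Matrix.fromBlocks A' B' C' D' := (Matrix.fromBlocks_toBlocks N⁻¹).symm
  rw [hNi, hN', Matrix.fromBlocks_multiply, ← Matrix.fromBlocks_one] at hNN
  have h12 : A * B' + B * D' = 0 := by
    simpa [-Matrix.fromBlocks_one] using congrArg Matrix.toBlocks₁₂ hNN
  have h22 : C * B' + D * D' = 1 := by
    simpa [← Matrix.fromBlocks_one] using congrArg Matrix.toBlocks₂₂ hNN
  have key : N * Matrix.fromBlocks 1 B' 0 D' = Matrix.fromBlocks A 0 C 1 := by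
    conv_lhs => rw [hN']
    rw [Matrix.fromBlocks_multiply, h12, h22]
    simp
  have hdet := congrArg Matrix.det key
  rw [Matrix.det_mul, Matrix.det_fromBlocks_zero₂₁, Matrix.det_fromBlocks_zero₁₂] at hdet
  simp only [Matrix.det_one, one_mul, mul_one] at hdet
  exact hdet.symm

lemma sign_eq_signAux {n : ℕ} (f : Equiv.Perm (Fin n)) :
    Equiv.Perm.sign f = Equiv.Perm.signAux f := by
  refine Equiv.Perm.swap_induction_on f ?_ fun g x y hxy ih => ?_
  · simp [Equiv.Perm.signAux_one]
  · rw [Equiv.Perm.signAux_mul, Equiv.Perm.signAux_swap hxy, _root_.map_mul,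
      Equiv.Perm.sign_swap hxy, ih]

lemma signAux_eq_pow {n : ℕ} (f : Equiv.Perm (Fin n)) :
    Equiv.Perm.signAux f =
      (-1) ^ ((Equiv.Perm.finPairsLT n).filter fun x => f x.1 ≤ f x.2).card := by
  rw [Equiv.Perm.signAux, Finset.prod_ite, Finset.prod_const, Finset.prod_const_one, mul_one]




section BlockPerm

variable {n k m : ℕ}

noncomputable def blockEquiv (I : Finset (Fin n)) (hk : I.card = k) (hm : Iᶜ.card = m) :
    (Fin k ⊕ Fin m) ≃ Fin n :=
  Equiv.ofBijective
    (Sum.elim (fun a => ((I.orderIsoOfFin hk a : Fin n)))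
      (fun b => ((Iᶜ.orderIsoOfFin hm b : Fin n))))
    (by
      rw [Fintype.bijective_iff_injective_and_card]
      constructor
      · rintro (a | a) (b | b) hab
        · simp only [Sum.elim_inl] at hab
          exact congrArg Sum.inl ((I.orderIsoOfFin hk).injective (Subtype.coe_injective hab))
        · simp only [Sum.elim_inl, Sum.elim_inr] at hab
          have h1 : ((I.orderIsoOfFin hk a : Fin n)) ∈ I := (I.orderIsoOfFin hk a).2
          have h2 : ((Iᶜ.orderIsoOfFin hm b : Fin n)) ∈ Iᶜ := (Iᶜ.orderIsoOfFin hm b).2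
          rw [hab] at h1
          exact absurd h1 (Finset.mem_compl.1 h2)
        · simp only [Sum.elim_inl, Sum.elim_inr] at hab
          have h1 : ((I.orderIsoOfFin hk b : Fin n)) ∈ I := (I.orderIsoOfFin hk b).2
          have h2 : ((Iᶜ.orderIsoOfFin hm a : Fin n)) ∈ Iᶜ := (Iᶜ.orderIsoOfFin hm a).2
          rw [← hab] at h1
          exact absurd h1 (Finset.mem_compl.1 h2)
        · simp only [Sum.elim_inr] at hab
          exact congrArg Sum.inr ((Iᶜ.orderIsoOfFin hm).injective (Subtype.coe_injective hab))
      · simp [← hk, ← hm, Finset.card_add_card_compl])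

@[simp] lemma blockEquiv_inl (I : Finset (Fin n)) (hk : I.card = k) (hm : Iᶜ.card = m)
    (a : Fin k) : blockEquiv I hk hm (Sum.inl a) = (I.orderIsoOfFin hk a : Fin n) := rfl

@[simp] lemma blockEquiv_inr (I : Finset (Fin n)) (hk : I.card = k) (hm : Iᶜ.card = m)
    (b : Fin m) : blockEquiv I hk hm (Sum.inr b) = (Iᶜ.orderIsoOfFin hm b : Fin n) := rfl

noncomputable def blockPerm (I : Finset (Fin n)) (hk : I.card = k) (hm : Iᶜ.card = m)
    (hn : k + m = n) : Equiv.Perm (Fin n) :=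
  ((finCongr hn.symm).trans finSumFinEquiv.symm).trans (blockEquiv I hk hm)

lemma blockPerm_apply_lt (I : Finset (Fin n)) (hk : I.card = k) (hm : Iᶜ.card = m)
    (hn : k + m = n) (x : Fin n) (hx : (x : ℕ) < k) :
    blockPerm I hk hm hn x = (I.orderIsoOfFin hk ⟨x, hx⟩ : Fin n) := by
  have hc : (finCongr hn.symm x : Fin (k + m)) = Fin.castAdd m ⟨x, hx⟩ := by
    ext; simp
  simp only [blockPerm, Equiv.trans_apply, hc, finSumFinEquiv_symm_apply_castAdd,
    blockEquiv_inl]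

lemma blockPerm_apply_ge (I : Finset (Fin n)) (hk : I.card = k) (hm : Iᶜ.card = m)
    (hn : k + m = n) (x : Fin n) (hx : k ≤ (x : ℕ)) :
    blockPerm I hk hm hn x =
      (Iᶜ.orderIsoOfFin hm ⟨(x : ℕ) - k, by have := x.isLt; omega⟩ : Fin n) := by
  have hc : (finCongr hn.symm x : Fin (k + m)) =
      Fin.natAdd k ⟨(x : ℕ) - k, by have := x.isLt; omega⟩ := by
    ext; simp [Fin.natAdd]; omega
  simp only [blockPerm, Equiv.trans_apply, hc, finSumFinEquiv_symm_apply_natAdd,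
    blockEquiv_inr]

lemma blockPerm_mem_of_lt (I : Finset (Fin n)) (hk : I.card = k) (hm : Iᶜ.card = m)
    (hn : k + m = n) (x : Fin n) (hx : (x : ℕ) < k) : blockPerm I hk hm hn x ∈ I := by
  rw [blockPerm_apply_lt I hk hm hn x hx]; exact (I.orderIsoOfFin hk _).2

lemma blockPerm_mem_of_ge (I : Finset (Fin n)) (hk : I.card = k) (hm : Iᶜ.card = m)
    (hn : k + m = n) (x : Fin n) (hx : k ≤ (x : ℕ)) : blockPerm I hk hm hn x ∈ Iᶜ := by
  rw [blockPerm_apply_ge I hk hm hn x hx]; exact (Iᶜ.orderIsoOfFin hm _).2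

lemma blockPerm_lt_lt (I : Finset (Fin n)) (hk : I.card = k) (hm : Iᶜ.card = m)
    (hn : k + m = n) {x y : Fin n} (hxy : x < y) (hy : (y : ℕ) < k) :
    blockPerm I hk hm hn x < blockPerm I hk hm hn y := by
  have hx : (x : ℕ) < k := lt_trans hxy hy
  rw [blockPerm_apply_lt I hk hm hn x hx, blockPerm_apply_lt I hk hm hn y hy]
  exact Subtype.coe_lt_coe.2 ((I.orderIsoOfFin hk).strictMono (show (⟨x, hx⟩ : Fin k) < ⟨y, hy⟩ from hxy))

lemma blockPerm_ge_ge (I : Finset (Fin n)) (hk : I.card = k) (hm : Iᶜ.card = m)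
    (hn : k + m = n) {x y : Fin n} (hxy : x < y) (hx : k ≤ (x : ℕ)) :
    blockPerm I hk hm hn x < blockPerm I hk hm hn y := by
  have hy : k ≤ (y : ℕ) := le_trans hx (le_of_lt hxy)
  rw [blockPerm_apply_ge I hk hm hn x hx, blockPerm_apply_ge I hk hm hn y hy]
  refine Subtype.coe_lt_coe.2 ((Iᶜ.orderIsoOfFin hm).strictMono ?_)
  show ((x : ℕ) - k) < ((y : ℕ) - k)
  have : (x : ℕ) < (y : ℕ) := hxy
  omega

end BlockPerm
section Counting

variable {n : ℕ}

lemma card_filter_product (s t : Finset (Fin n)) :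
    ((s ×ˢ t).filter fun p => p.2 < p.1).card
      = ∑ i ∈ s, (t.filter fun j => j < i).card := by
  rw [Finset.card_filter, Finset.sum_product]
  refine Finset.sum_congr rfl fun i _ => ?_
  rw [Finset.card_filter]

lemma filter_lt_compl_card (I : Finset (Fin n)) (i : Fin n) :
    (Iᶜ.filter fun j => j < i).card + (I.filter fun j => j < i).card = (i : ℕ) := by
  rw [← Finset.card_union_of_disjoint
    (Finset.disjoint_filter_filter disjoint_compl_left), ← Finset.filter_union]
  have h1 : Iᶜ ∪ I = Finset.univ := by
    ext x; by_cases hx : x ∈ I <;> simp [hx]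
  have h2 : (Finset.univ.filter fun j : Fin n => j < i) = Finset.Iio i := by ext x; simp
  rw [h1, h2, Fin.card_Iio]

lemma two_mul_pairs (s : Finset (Fin n)) :
    2 * ((s ×ˢ s).filter fun p => p.2 < p.1).card = s.card * s.card - s.card := by
  have hswap : ((s ×ˢ s).filter fun p => p.2 < p.1).card
      = ((s ×ˢ s).filter fun p => p.1 < p.2).card := by
    refine Finset.card_bij' (fun p _ => p.swap) (fun p _ => p.swap) ?_ ?_ ?_ ?_ <;>
      simp +contextual [Finset.mem_filter, Finset.mem_product, and_comm]
  have hdisj : Disjoint ((s ×ˢ s).filter fun p => p.2 < p.1)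
      ((s ×ˢ s).filter fun p => p.1 < p.2) := by
    rw [Finset.disjoint_filter]
    intro p _ hp1 hp2
    exact absurd (lt_trans hp1 hp2) (lt_irrefl _)
  have hunion : (((s ×ˢ s).filter fun p => p.2 < p.1)
      ∪ ((s ×ˢ s).filter fun p => p.1 < p.2)) = s.offDiag := by
    ext p
    simp only [Finset.mem_union, Finset.mem_filter, Finset.mem_product, Finset.mem_offDiag]
    constructor
    · rintro (⟨⟨h1, h2⟩, h3⟩ | ⟨⟨h1, h2⟩, h3⟩)
      · exact ⟨h1, h2, (ne_of_lt h3).symm⟩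
      · exact ⟨h1, h2, ne_of_lt h3⟩
    · rintro ⟨h1, h2, h3⟩
      rcases lt_or_gt_of_ne h3 with h | h
      · exact Or.inr ⟨⟨h1, h2⟩, h⟩
      · exact Or.inl ⟨⟨h1, h2⟩, h⟩
  have := Finset.card_union_of_disjoint hdisj
  rw [hunion, Finset.offDiag_card, ← hswap] at this
  omega

lemma pairs_card_eq {s t : Finset (Fin n)} (hst : s.card = t.card) :
    ((s ×ˢ s).filter fun p => p.2 < p.1).card
      = ((t ×ˢ t).filter fun p => p.2 < p.1).card := by
  have h1 := two_mul_pairs s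
  have h2 := two_mul_pairs t
  rw [hst] at h1
  omega

end Counting

section SignBlock

variable {n k m : ℕ}

lemma sign_blockPerm (I : Finset (Fin n)) (hk : I.card = k) (hm : Iᶜ.card = m)
    (hn : k + m = n) :
    Equiv.Perm.sign (blockPerm I hk hm hn)
      = (-1) ^ ((I ×ˢ Iᶜ).filter fun p : Fin n × Fin n => p.2 < p.1).card := by
  rw [sign_eq_signAux, signAux_eq_pow]
  congr 1
  set σ := blockPerm I hk hm hn with hσ
  have hS : ∀ x : (Σ _ : Fin n, Fin n),
      x ∈ (Equiv.Perm.finPairsLT n).filter (fun x => σ x.1 ≤ σ x.2) ↔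
        ((x.2 : ℕ) < k ∧ k ≤ (x.1 : ℕ) ∧ σ x.1 < σ x.2) := by
    rintro ⟨a, b⟩
    simp only [Finset.mem_filter, Equiv.Perm.mem_finPairsLT]
    constructor
    · rintro ⟨hba, hle⟩
      have hne : σ a ≠ σ b := fun hh => (ne_of_gt hba) (σ.injective hh)
      have hlt : σ a < σ b := lt_of_le_of_ne hle hne
      by_cases hak : (a : ℕ) < k
      · exact absurd (blockPerm_lt_lt I hk hm hn hba hak) (not_lt.2 hle)
      · by_cases hbk : (b : ℕ) < k
        · exact ⟨hbk, not_lt.1 hak, hlt⟩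
        · exact absurd (blockPerm_ge_ge I hk hm hn hba (not_lt.1 hbk)) (not_lt.2 hle)
    · rintro ⟨h1, h2, h3⟩
      refine ⟨?_, le_of_lt h3⟩
      exact Fin.lt_def.2 (lt_of_lt_of_le h1 h2)
  have hT : ∀ p : Fin n × Fin n,
      p ∈ (I ×ˢ Iᶜ).filter (fun p => p.2 < p.1) ↔ (p.1 ∈ I ∧ p.2 ∈ Iᶜ ∧ p.2 < p.1) := by
    intro p; simp [Finset.mem_filter, Finset.mem_product, and_assoc]
  refine Finset.card_bij' (fun x _ => (σ x.2, σ x.1)) (fun p _ => ⟨σ.symm p.2, σ.symm p.1⟩)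
    ?_ ?_ ?_ ?_
  · intro x hx
    obtain ⟨h1, h2, h3⟩ := (hS x).1 hx
    exact (hT _).2 ⟨blockPerm_mem_of_lt I hk hm hn _ h1,
      blockPerm_mem_of_ge I hk hm hn _ h2, h3⟩
  · intro p hp
    obtain ⟨h1, h2, h3⟩ := (hT p).1 hp
    have ha : k ≤ ((σ.symm p.2 : Fin n) : ℕ) := by
      by_contra hcon
      have := blockPerm_mem_of_lt I hk hm hn (σ.symm p.2) (not_le.1 hcon)
      rw [hσ] at this
      rw [show blockPerm I hk hm hn (σ.symm p.2) = p.2 from σ.apply_symm_apply p.2] at this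
      exact absurd this (Finset.mem_compl.1 h2)
    have hb : ((σ.symm p.1 : Fin n) : ℕ) < k := by
      by_contra hcon
      have := blockPerm_mem_of_ge I hk hm hn (σ.symm p.1) (not_lt.1 hcon)
      rw [hσ] at this
      rw [show blockPerm I hk hm hn (σ.symm p.1) = p.1 from σ.apply_symm_apply p.1] at this
      exact absurd (Finset.mem_compl.1 this) (not_not.2 h1)
    refine (hS _).2 ⟨hb, ha, ?_⟩
    show σ (σ.symm p.2) < σ (σ.symm p.1)
    rw [σ.apply_symm_apply, σ.apply_symm_apply]
    exact h3
  · rintro ⟨a, b⟩ _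
    simp
  · rintro ⟨u, v⟩ _
    simp

end SignBlock
/-- Determinant of the (square) submatrix of `L` with rows `I` and columns `J`
(both taken in increasing order), where `|I| = |J|`. -/
noncomputable def Matrix.minorDet {n : ℕ} (L : Matrix (Fin n) (Fin n) ℝ)
    (I J : Finset (Fin n)) (h : I.card = J.card) : ℝ :=
  Matrix.det (Matrix.of fun a b : Fin I.card =>
    L (I.orderIsoOfFin rfl a) (J.orderIsoOfFin h.symm b))

lemma minorDet_eq {n : ℕ} (L' : Matrix (Fin n) (Fin n) ℝ) (s t : Finset (Fin n))
    (hst : s.card = t.card) {c : ℕ} (h1 : s.card = c) (h2 : t.card = c) :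
    Matrix.minorDet L' s t hst =
      Matrix.det (Matrix.of fun a b : Fin c =>
        L' (s.orderIsoOfFin h1 a) (t.orderIsoOfFin h2 b)) := by
  subst h1
  rfl

/-- Jacobi's complementary minor formula:
`det L[I,J] = (−1)^{Σ_{i∈I} i + Σ_{j∈J} j} ⋅ det L ⋅ det L⁻¹[J̄, Ī]`
(indices counted 1-based, as in `[n] = {1, …, n}`). -/
theorem stmt_1 {n : ℕ} (L : Matrix (Fin n) (Fin n) ℝ) (hL : IsUnit L.det)
    (I J : Finset (Fin n)) (h : I.card = J.card)
    (hc : Jᶜ.card = Iᶜ.card) :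
    Matrix.minorDet L I J h =
      (-1 : ℝ) ^ ((∑ i ∈ I, ((i : ℕ) + 1)) + ∑ j ∈ J, ((j : ℕ) + 1)) *
        L.det * Matrix.minorDet L⁻¹ Jᶜ Iᶜ hc := by
  have hn : I.card + Iᶜ.card = n := by
    simpa using I.card_add_card_compl
  set σI := blockPerm I rfl rfl hn with hσI
  set σJ := blockPerm J h.symm hc hn with hσJ
  set eI := blockEquiv I (rfl : I.card = I.card) (rfl : Iᶜ.card = Iᶜ.card) with heI
  set eJ := blockEquiv J h.symm hc with heJ
  set cEq : Fin n ≃ (Fin I.card ⊕ Fin Iᶜ.card) :=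
    (finCongr hn.symm).trans finSumFinEquiv.symm with hcEq
  set M := L.submatrix ⇑eI ⇑eJ with hMdef
  have hcomp : ∀ x, σI (cEq.symm x) = eI x := fun x => by
    show eI (cEq (cEq.symm x)) = eI x
    rw [Equiv.apply_symm_apply]
  have hcompJ : ∀ x, σJ (cEq.symm x) = eJ x := fun x => by
    show eJ (cEq (cEq.symm x)) = eJ x
    rw [Equiv.apply_symm_apply]
  have hMeq : M = (L.submatrix ⇑σI ⇑σJ).submatrix ⇑cEq.symm ⇑cEq.symm := by
    ext x y
    simp only [hMdef, Matrix.submatrix_apply, hcomp, hcompJ]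
  have hsub : L.submatrix ⇑σI ⇑σJ = (L.submatrix id ⇑σJ).submatrix ⇑σI id := by
    rw [Matrix.submatrix_submatrix, Function.comp_id, Function.id_comp]
  have hMdet : M.det =
      ((Equiv.Perm.sign σI : ℤ) : ℝ) * ((Equiv.Perm.sign σJ : ℤ) : ℝ) * L.det := by
    rw [hMeq, Matrix.det_submatrix_equiv_self, hsub, Matrix.det_permute, Matrix.det_permute']
    push_cast
    ring
  have hsgn : ∀ τ : Equiv.Perm (Fin n), ((Equiv.Perm.sign τ : ℤ) : ℝ) ≠ 0 := by
    intro τ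
    rcases Int.units_eq_one_or (Equiv.Perm.sign τ) with hh | hh <;> simp [hh]
  have hMunit : IsUnit M.det := by
    rw [hMdet]
    exact isUnit_iff_ne_zero.2
      (mul_ne_zero (mul_ne_zero (hsgn σI) (hsgn σJ)) hL.ne_zero)
  have hMinv : M⁻¹ = L⁻¹.submatrix ⇑eJ ⇑eI := by
    apply Matrix.inv_eq_right_inv
    rw [hMdef, Matrix.submatrix_mul_equiv, Matrix.mul_nonsing_inv L hL,
      Matrix.submatrix_one_equiv]
  have hkey := blockJacobi M hMunit
  have hLHS : Matrix.minorDet L I J h =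
      Matrix.det (Matrix.of fun a b : Fin I.card => M (Sum.inl a) (Sum.inl b)) := rfl
  have hRHS : Matrix.det (Matrix.of fun b a : Fin Iᶜ.card => M⁻¹ (Sum.inr b) (Sum.inr a)) =
      Matrix.minorDet L⁻¹ Jᶜ Iᶜ hc := by
    rw [minorDet_eq L⁻¹ Jᶜ Iᶜ hc hc rfl, hMinv]
    rfl
  rw [hLHS, hkey, hMdet, hRHS]
  have hsI := sign_blockPerm I rfl rfl hn
  have hsJ := sign_blockPerm J h.symm hc hn
  set a1 := ((I ×ˢ Iᶜ).filter fun p : Fin n × Fin n => p.2 < p.1).card with ha1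
  set a2 := ((J ×ˢ Jᶜ).filter fun p : Fin n × Fin n => p.2 < p.1).card with ha2
  set c1 := ((I ×ˢ I).filter fun p : Fin n × Fin n => p.2 < p.1).card with hc1
  set c2 := ((J ×ˢ J).filter fun p : Fin n × Fin n => p.2 < p.1).card with hc2
  have hI1 : a1 + c1 = ∑ i ∈ I, (i : ℕ) := by
    rw [ha1, hc1, card_filter_product, card_filter_product, ← Finset.sum_add_distrib]
    exact Finset.sum_congr rfl fun i _ => filter_lt_compl_card I i
  have hJ1 : a2 + c2 = ∑ j ∈ J, (j : ℕ) := by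
    rw [ha2, hc2, card_filter_product, card_filter_product, ← Finset.sum_add_distrib]
    exact Finset.sum_congr rfl fun j _ => filter_lt_compl_card J j
  have hcc : c1 = c2 := pairs_card_eq h
  have hE : (∑ i ∈ I, ((i : ℕ) + 1)) + ∑ j ∈ J, ((j : ℕ) + 1)
      = (a1 + a2) + 2 * (c1 + I.card) := by
    rw [Finset.sum_add_distrib, Finset.sum_add_distrib]
    simp only [Finset.sum_const, smul_eq_mul, mul_one]
    omega
  rw [hsI, hsJ, hE]
  have hpow : ((-1 : ℝ)) ^ ((a1 + a2) + 2 * (c1 + I.card)) = (-1) ^ a1 * (-1) ^ a2 := by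
    rw [pow_add, pow_add, pow_mul]
    norm_num
  rw [hpow]
  push_cast
  ring
end

section
/- Let L ∈ ℝ^{n×n} be positive semidefinite. Then the set function f(S) = log det L[S] (with values in ℝ ∪ {−∞}, where log 0 = −∞ and det L[∅] = 1) is submodular: for all S ⊆ T ⊆ [n] and i ∉ T, f(S ∪ {i}) − f(S) ≥ f(T ∪ {i}) − f(T). -/
/-- Principal submatrix of `L` indexed by the finset `S`. -/
def Matrix.psub {n : ℕ} (L : Matrix (Fin n) (Fin n) ℝ) (S : Finset (Fin n)) :
    Matrix S S ℝ := Matrix.of fun i j => L i j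

/-- Determinant of the principal submatrix (with `det L[∅] = 1`). -/
noncomputable def Matrix.pdet {n : ℕ} (L : Matrix (Fin n) (Fin n) ℝ) (S : Finset (Fin n)) : ℝ :=
  (Matrix.psub L S).det

/-- Extended-real logarithm: `elog x = log x` for `x > 0` and `elog x = −∞` otherwise
(so `log 0 = −∞`). -/
noncomputable def elog (x : ℝ) : EReal := if x ≤ 0 then ⊥ else ((Real.log x : ℝ) : EReal)

namespace SubmodAux

open Matrix

variable {n : ℕ}

/-- Extend a vector on a subtype by zero. -/
def ext (S : Finset (Fin n)) (v : {x // x ∈ S} → ℝ) : Fin n → ℝ :=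
  fun k => if h : k ∈ S then v ⟨k, h⟩ else 0

lemma ext_apply_mem (S : Finset (Fin n)) (v : {x // x ∈ S} → ℝ) {k : Fin n} (h : k ∈ S) :
    ext S v k = v ⟨k, h⟩ := dif_pos h

lemma ext_apply_not_mem (S : Finset (Fin n)) (v : {x // x ∈ S} → ℝ) {k : Fin n} (h : k ∉ S) :
    ext S v k = 0 := dif_neg h

lemma sum_restrict (S : Finset (Fin n)) (F : Fin n → ℝ) (hF : ∀ k, k ∉ S → F k = 0) :
    ∑ k : Fin n, F k = ∑ j : {x // x ∈ S}, F j := by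
  rw [Finset.sum_coe_sort S F]
  exact (Finset.sum_subset (Finset.subset_univ S) (fun x _ hx => hF x hx)).symm

lemma ext_dot (S : Finset (Fin n)) (v : {x // x ∈ S} → ℝ) (y : Fin n → ℝ) :
    ext S v ⬝ᵥ y = ∑ j : {x // x ∈ S}, v j * y j := by
  unfold dotProduct
  rw [sum_restrict S (fun k => ext S v k * y k)
    (fun k hk => by show ext S v k * y k = 0; rw [ext_apply_not_mem S v hk, zero_mul])]
  exact Finset.sum_congr rfl fun j _ => by rw [ext_apply_mem S v j.2]

lemma dot_ext (S : Finset (Fin n)) (v : {x // x ∈ S} → ℝ) (y : Fin n → ℝ) :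
    y ⬝ᵥ ext S v = ∑ j : {x // x ∈ S}, y j * v j := by
  rw [dotProduct_comm, ext_dot]
  exact Finset.sum_congr rfl fun j _ => mul_comm _ _

lemma mulVec_ext_mem (L : Matrix (Fin n) (Fin n) ℝ) (S : Finset (Fin n))
    (v : {x // x ∈ S} → ℝ) {k : Fin n} (hk : k ∈ S) :
    (L *ᵥ ext S v) k = (L.psub S *ᵥ v) ⟨k, hk⟩ := by
  show (fun m => L k m) ⬝ᵥ ext S v = _
  rw [dot_ext]
  rfl

lemma ext_dot_mulVec (L : Matrix (Fin n) (Fin n) ℝ) (S : Finset (Fin n))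
    (v w : {x // x ∈ S} → ℝ) :
    ext S v ⬝ᵥ (L *ᵥ ext S w) = v ⬝ᵥ (L.psub S *ᵥ w) := by
  rw [ext_dot]
  exact Finset.sum_congr rfl fun j _ => by rw [mulVec_ext_mem L S w j.2]

lemma ext_eq_zero_iff (S : Finset (Fin n)) (v : {x // x ∈ S} → ℝ) :
    ext S v = 0 ↔ v = 0 := by
  constructor
  · intro h
    funext j
    have := congrFun h j
    rwa [ext_apply_mem S v j.2, Subtype.coe_eta] at this
  · rintro rfl
    funext k
    by_cases h : k ∈ S
    · rw [ext_apply_mem S 0 h]; rfl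
    · exact ext_apply_not_mem S 0 h

lemma psub_posSemidef {L : Matrix (Fin n) (Fin n) ℝ} (hL : L.PosSemidef) (S : Finset (Fin n)) :
    (L.psub S).PosSemidef :=
  hL.submatrix ((↑) : {x // x ∈ S} → Fin n)

lemma posSemidef_det_nonneg {m : Type*} [Fintype m] [DecidableEq m] {A : Matrix m m ℝ}
    (hA : A.PosSemidef) : 0 ≤ A.det := by
  exact hA.det_nonneg

lemma posDef_of_det_ne_zero {m : Type*} [Fintype m] [DecidableEq m] {A : Matrix m m ℝ}
    (hA : A.PosSemidef) (hd : A.det ≠ 0) : A.PosDef := by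
  refine Matrix.PosDef.of_dotProduct_mulVec_pos hA.1 fun x hx => ?_
  rcases (hA.dotProduct_mulVec_nonneg x).lt_or_eq with h | h
  · exact h
  · exfalso
    have h0 : A *ᵥ x = 0 := (hA.dotProduct_mulVec_zero_iff x).mp h.symm
    have : x = 0 := by
      have hinv : A⁻¹ * A = 1 := Matrix.nonsing_inv_mul A (isUnit_iff_ne_zero.mpr hd)
      calc x = (A⁻¹ * A) *ᵥ x := by rw [hinv, Matrix.one_mulVec]
        _ = A⁻¹ *ᵥ (A *ᵥ x) := by rw [Matrix.mulVec_mulVec]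
        _ = 0 := by rw [h0, Matrix.mulVec_zero]
    exact hx this

lemma psub_posDef {L : Matrix (Fin n) (Fin n) ℝ} (hL : L.PosDef) (S : Finset (Fin n)) :
    (L.psub S).PosDef := by
  refine Matrix.PosDef.of_dotProduct_mulVec_pos (psub_posSemidef hL.posSemidef S).1 fun x hx => ?_
  have hx' : ext S x ≠ 0 := fun h => hx ((ext_eq_zero_iff S x).mp h)
  have := hL.dotProduct_mulVec_pos hx'
  rw [star_trivial, ext_dot_mulVec L S x x] at this
  simpa using this

lemma pdet_zero_mono {L : Matrix (Fin n) (Fin n) ℝ} (hL : L.PosSemidef)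
    {S T : Finset (Fin n)} (hST : S ⊆ T) (h : L.pdet S = 0) : L.pdet T = 0 := by
  by_contra hT
  have hTpd : (L.psub T).PosDef := posDef_of_det_ne_zero (psub_posSemidef hL T) hT
  have hSpd : (L.psub S).PosDef := by
    refine Matrix.PosDef.of_dotProduct_mulVec_pos (psub_posSemidef hL S).1 fun x hx => ?_
    set x' : {a // a ∈ T} → ℝ := fun j => if h : (j : Fin n) ∈ S then x ⟨j, h⟩ else 0 with hx'def
    have hext : ext T x' = ext S x := by
      funext k
      by_cases hk : k ∈ T
      · rw [ext_apply_mem T x' hk]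
        by_cases hkS : k ∈ S
        · rw [ext_apply_mem S x hkS]; simp [hx'def, hkS]
        · rw [ext_apply_not_mem S x hkS]; simp [hx'def, hkS]
      · rw [ext_apply_not_mem T x' hk, ext_apply_not_mem S x (fun hS => hk (hST hS))]
    have hx'ne : x' ≠ 0 := by
      intro h0
      apply hx
      funext j
      have := congrFun h0 ⟨(j : Fin n), hST j.2⟩
      simpa [hx'def, j.2] using this
    have := hTpd.dotProduct_mulVec_pos hx'ne
    rw [star_trivial, ← ext_dot_mulVec L T x' x', hext, ext_dot_mulVec L S x x] at this
    simpa using this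
  exact (hSpd.det_pos.ne' h).elim

/-- The Schur complement scalar of adding index `i` to the principal submatrix on `X`. -/
noncomputable def schur (L : Matrix (Fin n) (Fin n) ℝ) (X : Finset (Fin n)) (i : Fin n) : ℝ :=
  L i i - (fun j : {x // x ∈ X} => L i j) ⬝ᵥ ((L.psub X)⁻¹ *ᵥ (fun j : {x // x ∈ X} => L j i))

lemma pdet_insert (L : Matrix (Fin n) (Fin n) ℝ) (X : Finset (Fin n)) (i : Fin n)
    (hiX : i ∉ X) (hA : IsUnit (L.psub X).det) :
    L.pdet (insert i X) = L.pdet X * schur L X i := by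
  classical
  haveI : Invertible (L.psub X) := Matrix.invertibleOfIsUnitDet _ hA
  let e : {x // x ∈ insert i X} ≃ ({x // x ∈ X} ⊕ Unit) :=
    (Finset.subtypeInsertEquivOption hiX).trans (Equiv.optionEquivSumPUnit _)
  have hdet : L.pdet (insert i X) = ((L.psub (insert i X)).submatrix e.symm e.symm).det :=
    (Matrix.det_submatrix_equiv_self e.symm _).symm
  have hblock : (L.psub (insert i X)).submatrix e.symm e.symm =
      Matrix.fromBlocks (L.psub X) (Matrix.of fun (j : {x // x ∈ X}) (_ : Unit) => L j i)
        (Matrix.of fun (_ : Unit) (j : {x // x ∈ X}) => L i j)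
        (Matrix.of fun (_ : Unit) (_ : Unit) => L i i) := by
    have hl : ∀ j : {x // x ∈ X}, ((e.symm (Sum.inl j) : {x // x ∈ insert i X}) : Fin n) = j := by
      intro j; rfl
    have hr : ((e.symm (Sum.inr ()) : {x // x ∈ insert i X}) : Fin n) = i := rfl
    ext a b
    rcases a with a | a <;> rcases b with b | b <;>
      simp [Matrix.psub, Matrix.submatrix_apply, Matrix.fromBlocks, hl, hr]
  rw [hdet, hblock, Matrix.det_fromBlocks₁₁]
  have h1 : L.pdet X = (L.psub X).det := rfl
  rw [← h1]
  congr 1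
  rw [Matrix.det_unique]
  simp only [Matrix.sub_apply, Matrix.of_apply, Matrix.invOf_eq_nonsing_inv, schur]
  congr 1
  simp only [Matrix.mul_apply, Matrix.mulVec, dotProduct, Matrix.of_apply, Finset.sum_mul,
    Finset.mul_sum]
  rw [Finset.sum_comm]
  exact Finset.sum_congr rfl fun j _ => Finset.sum_congr rfl fun k _ => by ring

lemma dot_mulVec_symm {L : Matrix (Fin n) (Fin n) ℝ} (hsym : Lᵀ = L) (a b : Fin n → ℝ) :
    a ⬝ᵥ (L *ᵥ b) = b ⬝ᵥ (L *ᵥ a) := by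
  rw [Matrix.dotProduct_mulVec, ← hsym, Matrix.vecMul_transpose, hsym, dotProduct_comm]

lemma schur_mono {L : Matrix (Fin n) (Fin n) ℝ} (hL : L.PosDef)
    {S T : Finset (Fin n)} (hST : S ⊆ T) {i : Fin n} (hiT : i ∉ T) :
    schur L T i ≤ schur L S i := by
  classical
  have hsym : Lᵀ = L := hL.1
  have hentry : ∀ a b, L a b = L b a := fun a b =>
    (congrFun (congrFun hsym a) b).symm
  -- setup
  set eI : Fin n → ℝ := Pi.single i 1 with heI
  have heIapp : ∀ k, eI k = if k = i then 1 else 0 := by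
    intro k; simp [heI, Pi.single_apply]
  -- generic facts for X ∈ {S, T}
  have main : ∀ (X : Finset (Fin n)), i ∉ X →
      (∀ j : Fin n, j ∈ X → (L *ᵥ (eI - ext X ((L.psub X)⁻¹ *ᵥ fun j : {x // x ∈ X} => L j i))) j = 0)
      ∧ ((eI - ext X ((L.psub X)⁻¹ *ᵥ fun j : {x // x ∈ X} => L j i)) ⬝ᵥ
          (L *ᵥ (eI - ext X ((L.psub X)⁻¹ *ᵥ fun j : {x // x ∈ X} => L j i))) = schur L X i) := by
    intro X hiX
    set col : {x // x ∈ X} → ℝ := fun j => L j i with hcol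
    set A : Matrix {x // x ∈ X} {x // x ∈ X} ℝ := L.psub X with hA
    have hApd : A.PosDef := psub_posDef hL X
    have hAinv : A * A⁻¹ = 1 := Matrix.mul_nonsing_inv A hApd.det_pos.ne'.isUnit
    set w : {x // x ∈ X} → ℝ := A⁻¹ *ᵥ col with hw
    have hAw : A *ᵥ w = col := by
      rw [hw, Matrix.mulVec_mulVec, hAinv, Matrix.one_mulVec]
    set u : Fin n → ℝ := eI - ext X w with hu
    have horth : ∀ j : Fin n, j ∈ X → (L *ᵥ u) j = 0 := by
      intro j hj
      rw [hu, Matrix.mulVec_sub, Pi.sub_apply, mulVec_ext_mem L X w hj, hAw]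
      have : (L *ᵥ eI) j = L j i := by
        simp [heI, Matrix.mulVec_single]
      rw [this]
      simp [hcol]
    refine ⟨horth, ?_⟩
    -- compute the quadratic form
    have hLeI : L *ᵥ eI = fun k => L k i := by
      funext k; simp [heI, Matrix.mulVec_single]
    have h1 : eI ⬝ᵥ (L *ᵥ eI) = L i i := by
      rw [hLeI]; simp [heI]
    have h2 : ext X w ⬝ᵥ (L *ᵥ eI) = col ⬝ᵥ w := by
      rw [hLeI, ext_dot, dotProduct_comm]
      unfold dotProduct
      exact Finset.sum_congr rfl fun j _ => by rw [hcol]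
    have h3 : eI ⬝ᵥ (L *ᵥ ext X w) = col ⬝ᵥ w := by
      rw [dot_mulVec_symm hsym, h2]
    have h4 : ext X w ⬝ᵥ (L *ᵥ ext X w) = col ⬝ᵥ w := by
      rw [ext_dot_mulVec, hAw, dotProduct_comm]
    have hexp : u ⬝ᵥ (L *ᵥ u) =
        eI ⬝ᵥ (L *ᵥ eI) - eI ⬝ᵥ (L *ᵥ ext X w) - ext X w ⬝ᵥ (L *ᵥ eI)
          + ext X w ⬝ᵥ (L *ᵥ ext X w) := by
      rw [hu, Matrix.mulVec_sub, sub_dotProduct, dotProduct_sub, dotProduct_sub]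
      ring
    rw [hexp, h1, h2, h3, h4]
    have hschur : schur L X i = L i i - col ⬝ᵥ w := by
      unfold schur
      congr 1
      unfold dotProduct
      refine Finset.sum_congr rfl fun j _ => ?_
      show L i j * w j = col j * w j
      rw [hentry i j]
    rw [hschur]; ring
  obtain ⟨horthT, hquadT⟩ := main T hiT
  obtain ⟨_, hquadS⟩ := main S (fun h => hiT (hST h))
  set uS : Fin n → ℝ := eI - ext S ((L.psub S)⁻¹ *ᵥ fun j : {x // x ∈ S} => L j i) with huS
  set uT : Fin n → ℝ := eI - ext T ((L.psub T)⁻¹ *ᵥ fun j : {x // x ∈ T} => L j i) with huT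
  set d : Fin n → ℝ := uS - uT with hd
  have hdsupp : ∀ k, k ∉ T → d k = 0 := by
    intro k hk
    have hkS : k ∉ S := fun h => hk (hST h)
    simp only [hd, huS, huT, Pi.sub_apply]
    rw [ext_apply_not_mem S _ hkS, ext_apply_not_mem T _ hk]
    ring
  have hdorth : d ⬝ᵥ (L *ᵥ uT) = 0 := by
    unfold dotProduct
    apply Finset.sum_eq_zero
    intro k _
    by_cases hk : k ∈ T
    · rw [horthT k hk, mul_zero]
    · rw [hdsupp k hk, zero_mul]
  have hdorth' : uT ⬝ᵥ (L *ᵥ d) = 0 := by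
    rw [dot_mulVec_symm hsym, hdorth]
  have hdQ : 0 ≤ d ⬝ᵥ (L *ᵥ d) := by
    have := hL.posSemidef.dotProduct_mulVec_nonneg d
    simpa using this
  have hsplit : uS ⬝ᵥ (L *ᵥ uS) = uT ⬝ᵥ (L *ᵥ uT) + uT ⬝ᵥ (L *ᵥ d) + d ⬝ᵥ (L *ᵥ uT)
      + d ⬝ᵥ (L *ᵥ d) := by
    have : uS = uT + d := by rw [hd]; ring
    rw [this, Matrix.mulVec_add, add_dotProduct, dotProduct_add, dotProduct_add]
    ring
  rw [← hquadS, ← hquadT, hsplit, hdorth, hdorth']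
  linarith

lemma key_PD {L : Matrix (Fin n) (Fin n) ℝ} (hL : L.PosDef)
    {S T : Finset (Fin n)} (hST : S ⊆ T) {i : Fin n} (hiT : i ∉ T) :
    L.pdet (insert i T) * L.pdet S ≤ L.pdet (insert i S) * L.pdet T := by
  have hiS : i ∉ S := fun h => hiT (hST h)
  have hS := (psub_posDef hL S).det_pos
  have hT := (psub_posDef hL T).det_pos
  rw [pdet_insert L T i hiT hT.ne'.isUnit, pdet_insert L S i hiS hS.ne'.isUnit]
  have hmono := schur_mono hL hST hiT
  have hS' : 0 < L.pdet S := hS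
  have hT' : 0 < L.pdet T := hT
  nlinarith [mul_nonneg (mul_nonneg hS'.le hT'.le) (sub_nonneg.mpr hmono)]

lemma psub_add_smul_one (L : Matrix (Fin n) (Fin n) ℝ) (ε : ℝ) (X : Finset (Fin n)) :
    (L + ε • (1 : Matrix (Fin n) (Fin n) ℝ)).psub X = L.psub X + ε • 1 := by
  ext a b
  simp only [Matrix.psub, Matrix.of_apply, Matrix.add_apply, Matrix.smul_apply, Matrix.one_apply,
    smul_eq_mul, Subtype.coe_inj]

lemma pdet_add_continuous (L : Matrix (Fin n) (Fin n) ℝ) (X : Finset (Fin n)) :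
    Continuous fun ε : ℝ => (L + ε • (1 : Matrix (Fin n) (Fin n) ℝ)).pdet X := by
  have h : ∀ ε : ℝ, (L + ε • (1 : Matrix (Fin n) (Fin n) ℝ)).pdet X
      = (L.psub X + ε • 1).det := fun ε => by
    rw [Matrix.pdet, psub_add_smul_one]
  simp only [h]
  exact Continuous.matrix_det (continuous_const.add (continuous_id.smul continuous_const))

lemma posDef_add_smul_one {L : Matrix (Fin n) (Fin n) ℝ} (hL : L.PosSemidef)
    {ε : ℝ} (hε : 0 < ε) : (L + ε • (1 : Matrix (Fin n) (Fin n) ℝ)).PosDef := by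
  refine Matrix.PosDef.posSemidef_add hL ?_
  rw [Matrix.smul_one_eq_diagonal]
  exact .diagonal fun _ => hε

lemma key {L : Matrix (Fin n) (Fin n) ℝ} (hL : L.PosSemidef)
    {S T : Finset (Fin n)} (hST : S ⊆ T) {i : Fin n} (hiT : i ∉ T) :
    L.pdet (insert i T) * L.pdet S ≤ L.pdet (insert i S) * L.pdet T := by
  set g : ℝ → ℝ := fun ε =>
    (L + ε • 1).pdet (insert i S) * (L + ε • 1).pdet T
      - (L + ε • 1).pdet (insert i T) * (L + ε • 1).pdet S with hg
  have hcont : Continuous g :=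
    ((pdet_add_continuous L (insert i S)).mul (pdet_add_continuous L T)).sub
      ((pdet_add_continuous L (insert i T)).mul (pdet_add_continuous L S))
  have hpos : ∀ ε ∈ Set.Ioi (0 : ℝ), 0 ≤ g ε := fun ε hε =>
    sub_nonneg.mpr (key_PD (posDef_add_smul_one hL hε) hST hiT)
  have h0 : 0 ≤ g 0 := by
    have hten : Filter.Tendsto g (nhdsWithin 0 (Set.Ioi 0)) (nhds (g 0)) :=
      (hcont.tendsto 0).mono_left nhdsWithin_le_nhds
    exact ge_of_tendsto hten (Filter.eventually_of_mem self_mem_nhdsWithin hpos)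
  have hg0 : g 0 = L.pdet (insert i S) * L.pdet T - L.pdet (insert i T) * L.pdet S := by
    simp [hg]
  rw [hg0] at h0
  linarith

lemma pdet_nonneg {L : Matrix (Fin n) (Fin n) ℝ} (hL : L.PosSemidef) (X : Finset (Fin n)) :
    0 ≤ L.pdet X :=
  posSemidef_det_nonneg (psub_posSemidef hL X)

end SubmodAux

lemma elog_of_nonpos {x : ℝ} (h : x ≤ 0) : elog x = ⊥ := if_pos h

lemma elog_of_pos {x : ℝ} (h : 0 < x) : elog x = ((Real.log x : ℝ) : EReal) := if_neg (not_le.mpr h)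

lemma bot_sub_elog (x : ℝ) : (⊥ : EReal) - elog x = ⊥ := EReal.bot_sub _

/-- The set function `f(S) = log det L[S]`, valued in `ℝ ∪ {−∞}`, is submodular for a
positive semidefinite `L`. -/
theorem stmt_3 {n : ℕ} (L : Matrix (Fin n) (Fin n) ℝ) (hL : L.PosSemidef)
    (f : Finset (Fin n) → EReal) (hf : ∀ S, f S = elog (Matrix.pdet L S))
    (S T : Finset (Fin n)) (hST : S ⊆ T) (i : Fin n) (hi : i ∉ T) :
    f (insert i T) - f T ≤ f (insert i S) - f S := by
  classical
  have key := SubmodAux.key hL hST hi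
  have hSnn := SubmodAux.pdet_nonneg hL S
  have hTnn := SubmodAux.pdet_nonneg hL T
  have hSinn := SubmodAux.pdet_nonneg hL (insert i S)
  have hTinn := SubmodAux.pdet_nonneg hL (insert i T)
  rw [hf, hf, hf, hf]
  by_cases hTi : L.pdet (insert i T) ≤ 0
  · rw [elog_of_nonpos hTi, bot_sub_elog]
    exact bot_le
  · push_neg at hTi
    have hT : 0 < L.pdet T := by
      rcases hTnn.lt_or_eq with h | h
      · exact h
      · exact absurd (SubmodAux.pdet_zero_mono hL (Finset.subset_insert i T) h.symm)
          hTi.ne'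
    have hS : 0 < L.pdet S := by
      rcases hSnn.lt_or_eq with h | h
      · exact h
      · exact absurd (SubmodAux.pdet_zero_mono hL hST h.symm) hT.ne'
    have hSi : 0 < L.pdet (insert i S) := by
      have hprod : 0 < L.pdet (insert i S) * L.pdet T :=
        lt_of_lt_of_le (mul_pos hTi hS) key
      nlinarith
    rw [elog_of_pos hTi, elog_of_pos hT, elog_of_pos hS, elog_of_pos hSi,
      ← EReal.coe_sub, ← EReal.coe_sub, EReal.coe_le_coe_iff]
    have hlog : Real.log (L.pdet (insert i T) * L.pdet S)
        ≤ Real.log (L.pdet (insert i S) * L.pdet T) :=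
      Real.log_le_log (mul_pos hTi hS) key
    rw [Real.log_mul hTi.ne' hS.ne', Real.log_mul hSi.ne' hT.ne'] at hlog
    linarith
end

section
/- Let L ∈ ℝ^{n×n} be positive definite and let T ⊆ [n] with i ∈ T. Then f(T \ {i}) − f(T) = log det L^{−1}[(([n]\T) ∪ {i})] − log det L^{−1}[[n]\T], where f(S) = log det L[S]. -/
open Matrix in
lemma posDef_submatrix_of_injective {m l : Type*} [Fintype m] [Fintype l]
    (M : Matrix m m ℝ) (hM : M.PosDef) (f : l → m) (hf : Function.Injective f) :
    (M.submatrix f f).PosDef := by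
  rw [Matrix.posDef_iff_dotProduct_mulVec]
  constructor
  · show (M.submatrix f f)ᴴ = M.submatrix f f
    rw [Matrix.conjTranspose_submatrix, hM.isHermitian.eq]
  · intro x hx
    classical
    set y : m → ℝ := fun k => ∑ i, if k = f i then x i else 0 with hy
    have hyx : ∀ i, y (f i) = x i := by
      intro i
      simp [hy, hf.eq_iff]
    have hy0 : y ≠ 0 := by
      intro h
      apply hx
      funext i
      have := hyx i
      rw [h] at this
      simpa using this.symm
    have hmv : ∀ k, (M *ᵥ y) k = ∑ i', M k (f i') * x i' := by
      intro k
      simp only [Matrix.mulVec, dotProduct, hy, Finset.mul_sum, mul_ite, mul_zero]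
      rw [Finset.sum_comm]
      simp
    have hsub : ∀ i, ((M.submatrix f f) *ᵥ x) i = (M *ᵥ y) (f i) := by
      intro i
      rw [hmv]
      simp [Matrix.mulVec, dotProduct]
    have key : star x ⬝ᵥ (M.submatrix f f) *ᵥ x = star y ⬝ᵥ M *ᵥ y := by
      simp only [dotProduct, star_trivial]
      calc ∑ i, x i * ((M.submatrix f f) *ᵥ x) i
          = ∑ i, x i * (M *ᵥ y) (f i) := by simp [hsub]
        _ = ∑ k, y k * (M *ᵥ y) k := by
            simp only [hy, Finset.sum_mul, ite_mul, zero_mul]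
            rw [Finset.sum_comm]
            simp
    rw [key]
    exact hM.dotProduct_mulVec_pos hy0

lemma psub_posDef {n : ℕ} (L : Matrix (Fin n) (Fin n) ℝ) (hL : L.PosDef) (S : Finset (Fin n)) :
    (Matrix.psub L S).PosDef :=
  posDef_submatrix_of_injective L hL (Subtype.val) Subtype.val_injective

lemma pdet_pos {n : ℕ} (L : Matrix (Fin n) (Fin n) ℝ) (hL : L.PosDef) (S : Finset (Fin n)) :
    0 < Matrix.pdet L S :=
  (psub_posDef L hL S).det_pos

open Matrix in
/-- Jacobi's identity: `det (L⁻¹[S]) = det (L[Sᶜ]) / det L`. -/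
lemma jacobi {n : ℕ} (L : Matrix (Fin n) (Fin n) ℝ) (hL : L.PosDef) (S : Finset (Fin n)) :
    Matrix.pdet L⁻¹ S = Matrix.pdet L Sᶜ / L.det := by
  classical
  let e : (↥S ⊕ ↥(Sᶜ)) ≃ Fin n :=
    (Equiv.sumCongr (Equiv.refl ↥S) (Equiv.subtypeEquivRight (fun x => by simp))).trans
      (Equiv.Set.sumCompl (S : Set (Fin n)))
  have he₁ : ∀ a : ↥S, e (Sum.inl a) = ↑a := fun a => rfl
  have he₂ : ∀ b : ↥(Sᶜ), e (Sum.inr b) = ↑b := fun b => rfl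
  set A : Matrix ↥S ↥S ℝ := L.psub S with hA
  set B : Matrix ↥S ↥(Sᶜ) ℝ := Matrix.of fun i j => L i j with hB
  set C : Matrix ↥(Sᶜ) ↥S ℝ := Matrix.of fun i j => L i j with hC
  set D : Matrix ↥(Sᶜ) ↥(Sᶜ) ℝ := L.psub Sᶜ with hD
  have hM : L.submatrix e e = Matrix.fromBlocks A B C D := by
    ext i j
    cases i <;> cases j <;>
      simp [he₁, he₂, Matrix.fromBlocks, hA, hB, hC, hD, Matrix.psub]
  haveI iL : Invertible L := L.invertibleOfIsUnitDet (isUnit_iff_ne_zero.2 hL.det_pos.ne')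
  have hDpd : D.PosDef := psub_posDef L hL Sᶜ
  haveI iD : Invertible D := D.invertibleOfIsUnitDet (isUnit_iff_ne_zero.2 hDpd.det_pos.ne')
  haveI iM : Invertible (Matrix.fromBlocks A B C D) := by
    rw [← hM]; exact L.submatrixEquivInvertible e e
  haveI iS : Invertible (A - B * ⅟D * C) := Matrix.invertibleOfFromBlocks₂₂Invertible A B C D
  have hdet : L.det = D.det * (A - B * ⅟D * C).det := by
    rw [← Matrix.det_submatrix_equiv_self e, hM, Matrix.det_fromBlocks₂₂]
  have h2 : L⁻¹.psub S = ⅟(A - B * ⅟D * C) := by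
    calc L⁻¹.psub S = (L⁻¹.submatrix e e).toBlocks₁₁ := by
          ext i j; simp [Matrix.psub, Matrix.toBlocks₁₁, he₁]
      _ = ((L.submatrix e e)⁻¹).toBlocks₁₁ := by rw [Matrix.inv_submatrix_equiv]
      _ = ((Matrix.fromBlocks A B C D)⁻¹).toBlocks₁₁ := by rw [hM]
      _ = (⅟(Matrix.fromBlocks A B C D)).toBlocks₁₁ := by rw [Matrix.invOf_eq_nonsing_inv]
      _ = ⅟(A - B * ⅟D * C) := by rw [Matrix.invOf_fromBlocks₂₂_eq]; rfl
  have h3 : Matrix.pdet L⁻¹ S = ((A - B * ⅟D * C).det)⁻¹ := by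
    rw [Matrix.pdet, h2, Matrix.invOf_eq_nonsing_inv, Matrix.det_nonsing_inv,
      Ring.inverse_eq_inv']
  have hDdet : Matrix.pdet L Sᶜ = D.det := rfl
  rw [h3, hDdet, hdet, div_mul_eq_div_div, div_self hDpd.det_pos.ne', one_div]

/-- `f(T \ {i}) − f(T) = g((([n]\T) ∪ {i})) − g([n]\T)` where `f(S) = log det L[S]` and
`g(S) = log det L⁻¹[S]`. -/
theorem stmt_11 {n : ℕ} (L : Matrix (Fin n) (Fin n) ℝ) (hL : L.PosDef)
    (f : Finset (Fin n) → ℝ) (hf : ∀ S, f S = Real.log (Matrix.pdet L S))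
    (T : Finset (Fin n)) (i : Fin n) (hi : i ∈ T) :
    f (T.erase i) - f T =
      Real.log (Matrix.pdet L⁻¹ (insert i Tᶜ)) - Real.log (Matrix.pdet L⁻¹ Tᶜ) := by
  have heq : insert i Tᶜ = (T.erase i)ᶜ := by
    ext x
    by_cases hx : x = i <;> simp [hx, hi, Finset.mem_erase]
  have h1 := jacobi L hL Tᶜ
  have h2 := jacobi L hL (T.erase i)ᶜ
  rw [compl_compl] at h1 h2
  rw [hf, hf, heq, h1, h2,
    Real.log_div (pdet_pos L hL (T.erase i)).ne' hL.det_pos.ne',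
    Real.log_div (pdet_pos L hL T).ne' hL.det_pos.ne']
  ring
end

section
/- Let L ∈ ℝ^{n×n} be positive semidefinite, S ⊆ [n], and i, j ∉ S with i ≠ j. If det L[S] > 0, then det L[S∪{i}] · det L[S∪{j}] ≥ det L[S] · det L[S∪{i,j}] (Koteljanskii/log-submodularity inequality for principal minors). -/
lemma pdet_eq_det_submatrix {n : ℕ} (L : Matrix (Fin n) (Fin n) ℝ)
    {m : Type} [Fintype m] [DecidableEq m] (T : Finset (Fin n)) (g : m → Fin n)
    (hg : Function.Injective g) (hmem : ∀ x, g x ∈ T)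
    (hcard : Fintype.card m = T.card) :
    Matrix.pdet L T = (L.submatrix g g).det := by
  have hbij : Function.Bijective (fun x : m => (⟨g x, hmem x⟩ : T)) := by
    rw [Fintype.bijective_iff_injective_and_card]
    exact ⟨fun a b h => hg (congrArg Subtype.val h), by simpa [Fintype.card_coe] using hcard⟩
  let e : m ≃ T := Equiv.ofBijective _ hbij
  have key : Matrix.psub L T = (L.submatrix g g).submatrix e.symm e.symm := by
    ext a b
    have h1 : g (e.symm a) = (a : Fin n) := congrArg Subtype.val (e.apply_symm_apply a)
    have h2 : g (e.symm b) = (b : Fin n) := congrArg Subtype.val (e.apply_symm_apply b)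
    simp [Matrix.psub, Matrix.submatrix_apply, h1, h2]
  rw [Matrix.pdet, key, Matrix.det_submatrix_equiv_self]

lemma submatrix_sum_elim {n : ℕ} {m p : Type} (L : Matrix (Fin n) (Fin n) ℝ)
    (u : m → Fin n) (v : p → Fin n) :
    L.submatrix (Sum.elim u v) (Sum.elim u v) =
      Matrix.fromBlocks (L.submatrix u u) (L.submatrix u v)
        (L.submatrix v u) (L.submatrix v v) := by
  ext (k | k) (l | l) <;> rfl

open Matrix

/-- Koteljanskii / log-submodularity inequality for principal minors of a positive
semidefinite matrix. -/
theorem stmt_17 {n : ℕ} (L : Matrix (Fin n) (Fin n) ℝ) (hL : L.PosSemidef)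
    (S : Finset (Fin n)) (i j : Fin n) (hi : i ∉ S) (hj : j ∉ S) (hij : i ≠ j)
    (hpos : 0 < Matrix.pdet L S) :
    Matrix.pdet L S * Matrix.pdet L (insert i (insert j S)) ≤
      Matrix.pdet L (insert i S) * Matrix.pdet L (insert j S) := by
  classical
  have hsym : ∀ a b, L a b = L b a := by
    intro a b
    have := hL.1.apply b a
    simpa using this
  -- the block `A = L[S]`
  set cS : S → Fin n := fun k => (k : Fin n) with hcS
  set A : Matrix S S ℝ := L.submatrix cS cS with hAdef
  have hA : Matrix.pdet L S = A.det := rfl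
  have hAne : IsUnit A.det := isUnit_iff_ne_zero.2 (by rw [← hA]; exact hpos.ne')
  haveI : Invertible A := Matrix.invertibleOfIsUnitDet A hAne
  have hAsym : Aᵀ = A := by
    ext k l; exact hsym _ _
  have hAinv : ∀ k l, A⁻¹ k l = A⁻¹ l k := by
    intro k l
    have h : (A⁻¹)ᵀ = A⁻¹ := by rw [Matrix.transpose_nonsing_inv, hAsym]
    calc A⁻¹ k l = (A⁻¹)ᵀ l k := rfl
    _ = A⁻¹ l k := by rw [h]
  -- the Schur quadratic form
  set q : Fin n → Fin n → ℝ :=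
    fun a b => ∑ l : S, (∑ k : S, L a (cS k) * A⁻¹ k l) * L (cS l) b with hq
  have hqsym : ∀ a b, q a b = q b a := by
    intro a b
    simp only [hq, Finset.sum_mul]
    rw [Finset.sum_comm]
    refine Finset.sum_congr rfl fun k _ => Finset.sum_congr rfl fun l _ => ?_
    rw [hsym a (cS k), hsym (cS l) b, hAinv k l]; ring
  -- one-element extension
  have hone : ∀ a : Fin n, a ∉ S →
      Matrix.pdet L (insert a S) = A.det * (L a a - q a a) := by
    intro a ha
    have hg : Function.Injective (Sum.elim cS (fun _ : Unit => a)) := by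
      rintro (x | x) (y | y) h <;> simp only [Sum.elim_inl, Sum.elim_inr] at h
      · exact congrArg Sum.inl (Subtype.ext h)
      · exact absurd (h ▸ x.2) ha
      · exact absurd (h ▸ y.2) ha
      · rfl
    have hmem : ∀ x, Sum.elim cS (fun _ : Unit => a) x ∈ insert a S := by
      rintro (x | x)
      · exact Finset.mem_insert_of_mem x.2
      · exact Finset.mem_insert_self a S
    have hcard : Fintype.card (S ⊕ Unit) = (insert a S).card := by
      simp [Finset.card_insert_of_notMem ha]
    rw [pdet_eq_det_submatrix L _ _ hg hmem hcard, submatrix_sum_elim,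
      Matrix.det_fromBlocks₁₁, Matrix.invOf_eq_nonsing_inv]
    congr 1
    rw [Matrix.det_unique]
    simp [Matrix.sub_apply, Matrix.mul_apply, hq, Finset.sum_mul, ← hAdef]
  -- two-element extension
  have hg2 : Function.Injective (Sum.elim cS (fun t : Fin 2 => if t = 0 then i else j)) := by
    rintro (x | x) (y | y) h <;> simp only [Sum.elim_inl, Sum.elim_inr] at h
    · exact congrArg Sum.inl (Subtype.ext h)
    · split at h
      · exact absurd (h ▸ x.2) hi
      · exact absurd (h ▸ x.2) hj
    · split at h
      · exact absurd (h.symm ▸ y.2) hi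
      · exact absurd (h.symm ▸ y.2) hj
    · congr 1
      fin_cases x <;> fin_cases y <;> simp_all
  have hmem2 : ∀ x, Sum.elim cS (fun t : Fin 2 => if t = 0 then i else j) x
      ∈ insert i (insert j S) := by
    rintro (x | x)
    · exact Finset.mem_insert_of_mem (Finset.mem_insert_of_mem x.2)
    · by_cases h : x = 0 <;> simp [h]
  have hij' : i ∉ insert j S := by
    simp [Finset.mem_insert, hij, hi]
  have hcard2 : Fintype.card (S ⊕ Fin 2) = (insert i (insert j S)).card := by
    rw [Finset.card_insert_of_notMem hij', Finset.card_insert_of_notMem hj]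
    simp
  have htwo : Matrix.pdet L (insert i (insert j S)) =
      A.det * ((L i i - q i i) * (L j j - q j j) - (L i j - q i j) * (L j i - q j i)) := by
    rw [pdet_eq_det_submatrix L _ _ hg2 hmem2 hcard2, submatrix_sum_elim,
      Matrix.det_fromBlocks₁₁, Matrix.invOf_eq_nonsing_inv]
    congr 1
    rw [Matrix.det_fin_two]
    simp [Matrix.sub_apply, Matrix.mul_apply, hq, Finset.sum_mul, ← hAdef]
  rw [hA, hone i hi, hone j hj, htwo]
  have hqij : q j i = q i j := hqsym j i
  have hLij : L j i = L i j := hsym j i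
  rw [hqij, hLij]
  have hdet : (0:ℝ) < A.det := by rw [← hA]; exact hpos
  nlinarith [sq_nonneg (A.det * (L i j - q i j)), sq_nonneg (L i j - q i j), hdet.le]
end
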